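/- For a memoryless source, the D-tilted information density tensorizes: if X^n = (X₁,...,Xₙ) is drawn i.i.d. from P_X and ȷ_Y(x, D | P_X) denotes the D-tilted information density of the single-letter source, then ȷ_Y(X^n, D | P_X^n) = Σᵢ₌₁ⁿ ȷ_Y(Xᵢ, D | P_X). -/

import Mathlib

open MeasureTheory Real Finset

/-- Tensorization of the D-tilted information density for a memoryless source:
with ȷ(x) = -log ∫ exp(-s·(d(x,y) - D)) dP*(y) the single-letter tilted
information density (P* the optimal output distribution, s the tilt parameter),
the n-letter tilted information density with additive distortion
(1/n)·Σᵢ d(xᵢ,yᵢ), output distribution (P*)ⁿ and tilt parameter n·s satisfies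
ȷ_n(x^n) = Σᵢ ȷ(xᵢ). -/
theorem tilted_information_density_tensorizes
    {𝒳 𝒴 : Type*} [MeasurableSpace 𝒴]
    (P : Measure 𝒴) [IsProbabilityMeasure P]
    (d : 𝒳 → 𝒴 → ℝ) (s D : ℝ)
    (n : ℕ) (hn : 0 < n) (x : Fin n → 𝒳)
    (hint : ∀ i, Integrable (fun y => Real.exp (-s * (d (x i) y - D))) P) :
    - Real.log (∫ y : Fin n → 𝒴,
        Real.exp (-((n : ℝ) * s) *
          ((1 / (n : ℝ)) * ∑ i, d (x i) (y i) - D)) ∂(Measure.pi fun _ => P))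
      = ∑ i, (- Real.log (∫ y, Real.exp (-s * (d (x i) y - D)) ∂P)) := by
  have hn' : (n : ℝ) ≠ 0 := Nat.cast_ne_zero.mpr hn.ne'
  letI : MeasureSpace 𝒴 := ⟨P⟩
  have hpi : (Measure.pi fun _ : Fin n => P) = (volume : Measure (Fin n → 𝒴)) := rfl
  have hexp : ∀ y : Fin n → 𝒴,
      Real.exp (-((n : ℝ) * s) * ((1 / (n : ℝ)) * ∑ i, d (x i) (y i) - D))
        = ∏ i, Real.exp (-s * (d (x i) (y i) - D)) := by
    intro y
    rw [← Real.exp_sum]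
    congr 1
    have : ∑ i, -s * (d (x i) (y i) - D)
        = -s * ∑ i, (d (x i) (y i) - D) := by rw [Finset.mul_sum]
    rw [this, Finset.sum_sub_distrib, Finset.sum_const, Finset.card_univ, Fintype.card_fin]
    field_simp
    ring
  simp_rw [hexp, hpi]
  rw [MeasureTheory.integral_fintype_prod_volume_eq_prod
    (fun i y => Real.exp (-s * (d (x i) y - D)))]
  rw [Real.log_prod]
  · rw [← Finset.sum_neg_distrib]; rfl
  · intro i _
    exact (integral_exp_pos (hint i)).ne'
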